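/- For every natural number k ≥ 2 and every real ε ∈ (0,1), there exists a real polynomial p of degree at most ⌈√(2(k−1)·ln(2/ε))⌉ such that for every N×N complex positive semidefinite matrix ρ with ‖ρ‖ ≤ 1, ‖p(ρ) − ρ^{k−1}‖ ≤ ε, where p(ρ) is the polynomial functional calculus applied to ρ and ‖·‖ is the ℓ²→ℓ² operator norm. -/

import Mathlib

open scoped ComplexOrder

/-- The ℓ²→ℓ² operator norm (largest singular value) of a complex `N × N` matrix. -/
noncomputable def l2OpNorm {N : ℕ} (M : Matrix (Fin N) (Fin N) ℂ) : ℝ :=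
  ‖LinearMap.toContinuousLinearMap (Matrix.toEuclideanLin M)‖

section ScalarApprox

open Polynomial Finset Real

lemma natDegree_chebT_le : ∀ n : ℕ, (Polynomial.Chebyshev.T ℝ (n:ℤ)).natDegree ≤ n := by
  intro n
  induction n using Nat.strong_induction_on with
  | _ n ih =>
    match n with
    | 0 => simp [Polynomial.Chebyshev.T_zero]
    | 1 => simp [Polynomial.Chebyshev.T_one]
    | (n+2) =>
      push_cast [Polynomial.Chebyshev.T_add_two]
      refine le_trans (Polynomial.natDegree_sub_le _ _) ?_
      simp only [max_le_iff]
      constructor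
      · refine le_trans (Polynomial.natDegree_mul_le) ?_
        have h1 : (2 * X : ℝ[X]).natDegree ≤ 1 := by
          refine le_trans (Polynomial.natDegree_mul_le) ?_
          simp
        have := ih (n+1) (by omega)
        push_cast at this ⊢
        omega
      · exact le_trans (ih n (by omega)) (by omega)

lemma natDegree_chebT_le' (z : ℤ) : (Polynomial.Chebyshev.T ℝ z).natDegree ≤ z.natAbs := by
  rw [← Polynomial.Chebyshev.T_natAbs]
  exact natDegree_chebT_le _

lemma cos_pow_eq (m : ℕ) (θ : ℝ) :
    Real.cos θ ^ m = ∑ j ∈ range (m+1),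
      (m.choose j : ℝ) / 2^m * Real.cos ((((m:ℤ) - 2*j : ℤ) : ℝ) * θ) := by
  have key : ((2 * Real.cos θ : ℝ) : ℂ) ^ m
      = ∑ j ∈ range (m+1), (m.choose j : ℂ)
          * Complex.exp ((((2*(j:ℤ) - m : ℤ)) : ℝ) * θ * Complex.I) := by
    have h2 : ((2 * Real.cos θ : ℝ) : ℂ)
        = Complex.exp ((θ:ℂ) * Complex.I) + Complex.exp (-((θ:ℂ) * Complex.I)) := by
      push_cast [Complex.ofReal_cos]
      rw [Complex.cos]
      ring
    rw [h2, add_pow]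
    rw [Finset.sum_congr rfl]
    intro j hj
    simp only [Finset.mem_range] at hj
    have hjm : j ≤ m := by omega
    rw [← Complex.exp_nat_mul, ← Complex.exp_nat_mul, ← Complex.exp_add]
    rw [mul_comm]
    congr 2
    push_cast [hjm]
    ring
  have := congrArg Complex.re key
  rw [← Complex.ofReal_pow, Complex.ofReal_re, Complex.re_sum] at this
  have hterm : ∀ j ∈ range (m+1),
      ((m.choose j : ℂ) * Complex.exp ((((2*(j:ℤ) - m : ℤ)) : ℝ) * θ * Complex.I)).re
      = (m.choose j : ℝ) * Real.cos ((((m:ℤ) - 2*j : ℤ) : ℝ) * θ) := by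
    intro j _
    have hc : (m.choose j : ℂ) = ((m.choose j : ℝ) : ℂ) := by push_cast; ring
    rw [hc, Complex.re_ofReal_mul,
      show ((((2*(j:ℤ) - m : ℤ)):ℝ):ℂ) * (θ:ℂ) * Complex.I
        = (((((2*(j:ℤ) - m : ℤ)):ℝ) * θ : ℝ):ℂ) * Complex.I by push_cast; ring,
      Complex.exp_ofReal_mul_I_re]
    rw [show ((((m:ℤ) - 2*j : ℤ) : ℝ) * θ) = -((((2*(j:ℤ) - m : ℤ)) : ℝ) * θ) by push_cast; ring,
      Real.cos_neg]
  rw [Finset.sum_congr rfl hterm] at this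
  have h2m : (2:ℝ)^m ≠ 0 := by positivity
  rw [mul_pow] at this
  rw [show ∀ (f : ℕ → ℝ), ∑ j ∈ range (m+1), (m.choose j : ℝ) / 2^m * f j
      = (∑ j ∈ range (m+1), (m.choose j : ℝ) * f j) / 2^m by
    intro f; rw [Finset.sum_div]; exact Finset.sum_congr rfl fun j _ => by ring]
  rw [← this]
  field_simp

lemma chernoff_upper (m d : ℕ) (hm : 1 ≤ m) :
    ∑ j ∈ range (m+1), (if (d:ℤ) < 2*j - m then (m.choose j : ℝ) / 2^m else 0)
      ≤ Real.exp (-(d:ℝ)^2 / (2*m)) := by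
  set t : ℝ := d / m with ht
  have hm0 : (0:ℝ) < m := by positivity
  have ht0 : 0 ≤ t := by positivity
  have step1 : ∑ j ∈ range (m+1), (if (d:ℤ) < 2*j - m then (m.choose j : ℝ) / 2^m else 0)
      ≤ ∑ j ∈ range (m+1), (m.choose j : ℝ) / 2^m * Real.exp (t * (2*j - m - d)) := by
    refine Finset.sum_le_sum fun j _ => ?_
    split_ifs with h
    · have h' : (d:ℝ) < 2*(j:ℝ) - m := by exact_mod_cast h
      have h1 : (0:ℝ) ≤ t * (2*j - m - d) := by nlinarith
      have := Real.one_le_exp h1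
      have hc : (0:ℝ) ≤ (m.choose j : ℝ) / 2^m := by positivity
      nlinarith
    · positivity
  refine le_trans step1 ?_
  have step2 : ∑ j ∈ range (m+1), (m.choose j : ℝ) / 2^m * Real.exp (t * (2*j - m - d))
      = Real.exp (-(t*d)) * (Real.cosh t)^m := by
    have expand : ∀ j ∈ range (m+1), (m.choose j : ℝ) / 2^m * Real.exp (t * (2*j - m - d))
        = (Real.exp (-(t*((m:ℝ)+d))) / 2^m) * ((Real.exp (2*t))^j * (m.choose j : ℝ)) := by
      intro j _
      rw [← Real.exp_nat_mul]
      rw [show t * (2*(j:ℝ) - m - d) = (2*t)*j + (-(t*((m:ℝ)+d))) by ring, Real.exp_add]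
      ring
    rw [Finset.sum_congr rfl expand, ← Finset.mul_sum]
    have binom : ∑ j ∈ range (m+1), (Real.exp (2*t))^j * (m.choose j : ℝ)
        = (Real.exp (2*t) + 1)^m := by
      rw [add_pow]
      refine Finset.sum_congr rfl fun j _ => by rw [one_pow]; ring
    rw [binom]
    have hcosh : Real.exp (2*t) + 1 = Real.exp t * (2 * Real.cosh t) := by
      have h1 : Real.exp t * (2 * Real.cosh t)
          = Real.exp (t + t) + Real.exp (t + -t) := by
        rw [Real.cosh_eq, Real.exp_add, Real.exp_add]; ring
      rw [h1]; simp [Real.exp_zero]; ring_nf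
    rw [hcosh, mul_pow, mul_pow, ← Real.exp_nat_mul]
    have h2m : (2:ℝ)^m ≠ 0 := by positivity
    have hexp : Real.exp (-(t*((m:ℝ)+d))) * Real.exp ((m:ℝ)*t) = Real.exp (-(t*d)) := by
      rw [← Real.exp_add]; congr 1; ring
    field_simp
    rw [← Real.exp_add]; congr 1; ring
  rw [step2]
  have hcosh_le : (Real.cosh t)^m ≤ Real.exp ((m:ℝ) * t^2 / 2) := by
    have h1 : Real.cosh t ≤ Real.exp (t^2/2) := Real.cosh_le_exp_half_sq t
    have h2 : (Real.cosh t)^m ≤ (Real.exp (t^2/2))^m :=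
      pow_le_pow_left₀ (Real.cosh_pos t).le h1 m
    rwa [← Real.exp_nat_mul, show (m:ℝ) * (t^2/2) = (m:ℝ) * t^2/2 by ring] at h2
  have hfin : Real.exp (-(t*d)) * Real.exp ((m:ℝ) * t^2 / 2) = Real.exp (-(d:ℝ)^2/(2*m)) := by
    rw [← Real.exp_add]
    congr 1
    rw [ht]
    field_simp
    ring
  calc Real.exp (-(t*d)) * (Real.cosh t)^m
      ≤ Real.exp (-(t*d)) * Real.exp ((m:ℝ) * t^2 / 2) :=
        mul_le_mul_of_nonneg_left hcosh_le (Real.exp_pos _).le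
    _ = Real.exp (-(d:ℝ)^2/(2*m)) := hfin

lemma tail_bound (m d : ℕ) (hm : 1 ≤ m) :
    ∑ j ∈ range (m+1), (if (d:ℤ) < |(m:ℤ) - 2*j| then (m.choose j : ℝ) / 2^m else 0)
      ≤ 2 * Real.exp (-(d:ℝ)^2 / (2*m)) := by
  have reflect : ∑ j ∈ range (m+1), (if (d:ℤ) < (m:ℤ) - 2*j then (m.choose j : ℝ) / 2^m else 0)
      = ∑ j ∈ range (m+1), (if (d:ℤ) < 2*j - m then (m.choose j : ℝ) / 2^m else 0) := by
    refine Finset.sum_nbij' (fun j => m - j) (fun j => m - j) ?_ ?_ ?_ ?_ ?_ <;>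
      intro j hj <;> simp only [Finset.mem_range] at * <;> try omega
    have hjm : j ≤ m := by omega
    have hc : ((m - j : ℕ) : ℤ) = (m:ℤ) - j := by omega
    rw [Nat.choose_symm hjm]
    congr 1
    rw [eq_iff_iff]
    omega
  have point : ∀ j ∈ range (m+1),
      (if (d:ℤ) < |(m:ℤ) - 2*j| then (m.choose j : ℝ) / 2^m else 0)
      ≤ (if (d:ℤ) < (m:ℤ) - 2*j then (m.choose j : ℝ) / 2^m else 0)
        + (if (d:ℤ) < 2*j - m then (m.choose j : ℝ) / 2^m else 0) := by
    intro j _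
    have hc : (0:ℝ) ≤ (m.choose j : ℝ) / 2^m := by positivity
    have hnn : ∀ (P : Prop) (_ : Decidable P),
        (0:ℝ) ≤ if P then (m.choose j : ℝ) / 2^m else 0 := by
      intro P _; split_ifs <;> simp [hc]
    by_cases h : (d:ℤ) < |(m:ℤ) - 2*j|
    · rw [if_pos h]
      rcases lt_abs.mp h with h' | h'
      · rw [if_pos h']
        have := hnn ((d:ℤ) < 2*j - m) inferInstance
        linarith
      · rw [if_pos (show (d:ℤ) < 2*j - m by omega)]
        have := hnn ((d:ℤ) < (m:ℤ) - 2*j) inferInstance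
        linarith
    · rw [if_neg h]
      exact add_nonneg (hnn _ inferInstance) (hnn _ inferInstance)
  calc ∑ j ∈ range (m+1), (if (d:ℤ) < |(m:ℤ) - 2*j| then (m.choose j : ℝ) / 2^m else 0)
      ≤ ∑ j ∈ range (m+1), ((if (d:ℤ) < (m:ℤ) - 2*j then (m.choose j : ℝ) / 2^m else 0)
        + (if (d:ℤ) < 2*j - m then (m.choose j : ℝ) / 2^m else 0)) := Finset.sum_le_sum point
    _ = ∑ j ∈ range (m+1), (if (d:ℤ) < (m:ℤ) - 2*j then (m.choose j : ℝ) / 2^m else 0)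
        + ∑ j ∈ range (m+1), (if (d:ℤ) < 2*j - m then (m.choose j : ℝ) / 2^m else 0) :=
        Finset.sum_add_distrib
    _ ≤ Real.exp (-(d:ℝ)^2 / (2*m)) + Real.exp (-(d:ℝ)^2 / (2*m)) := by
        rw [reflect]; have := chernoff_upper m d hm; linarith
    _ = 2 * Real.exp (-(d:ℝ)^2 / (2*m)) := by ring

noncomputable def chebApprox (m d : ℕ) : ℝ[X] :=
  ∑ j ∈ range (m+1), if ((m:ℤ) - 2*j).natAbs ≤ d
    then C ((m.choose j : ℝ) / 2^m) * Polynomial.Chebyshev.T ℝ ((m:ℤ) - 2*j) else 0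

lemma chebApprox_natDegree_le (m d : ℕ) : (chebApprox m d).natDegree ≤ d := by
  refine le_trans (Polynomial.natDegree_sum_le_of_forall_le _ _ ?_) le_rfl
  intro j _
  split_ifs with h
  · exact le_trans (Polynomial.natDegree_C_mul_le _ _) (le_trans (natDegree_chebT_le' _) h)
  · simp

lemma chebApprox_err (m d : ℕ) (x : ℝ) (hx : x ∈ Set.Icc (-1:ℝ) 1) :
    |(chebApprox m d).eval x - x^m|
      ≤ ∑ j ∈ range (m+1), (if (d:ℤ) < |(m:ℤ) - 2*j| then (m.choose j : ℝ) / 2^m else 0) := by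
  obtain ⟨hx1, hx2⟩ := hx
  set θ := Real.arccos x with hθ
  have hcos : Real.cos θ = x := Real.cos_arccos hx1 hx2
  have heval : (chebApprox m d).eval x
      = ∑ j ∈ range (m+1), if ((m:ℤ) - 2*j).natAbs ≤ d
          then (m.choose j : ℝ) / 2^m * Real.cos ((((m:ℤ) - 2*j : ℤ) : ℝ) * θ) else 0 := by
    rw [chebApprox, Polynomial.eval_finset_sum]
    refine Finset.sum_congr rfl fun j _ => ?_
    rw [apply_ite (Polynomial.eval x), Polynomial.eval_mul, Polynomial.eval_C,
      Polynomial.eval_zero, ← hcos, Polynomial.Chebyshev.T_real_cos]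
  have hpow : x^m = ∑ j ∈ range (m+1),
      (m.choose j : ℝ) / 2^m * Real.cos ((((m:ℤ) - 2*j : ℤ) : ℝ) * θ) := by
    rw [← hcos]; exact cos_pow_eq m θ
  rw [heval, hpow, ← Finset.sum_sub_distrib]
  refine le_trans (Finset.abs_sum_le_sum_abs _ _) (Finset.sum_le_sum fun j _ => ?_)
  have hc : (0:ℝ) ≤ (m.choose j : ℝ) / 2^m := by positivity
  split_ifs with h1 h2 h2
  · simpa using hc
  · simp
  · rw [zero_sub, abs_neg, abs_mul]
    have := abs_cos_le_one ((((m:ℤ) - 2*j : ℤ) : ℝ) * θ)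
    calc |(m.choose j : ℝ) / 2^m| * |Real.cos ((((m:ℤ) - 2*j : ℤ) : ℝ) * θ)|
        ≤ |(m.choose j : ℝ) / 2^m| * 1 := by
          exact mul_le_mul_of_nonneg_left this (abs_nonneg _)
      _ = (m.choose j : ℝ) / 2^m := by rw [mul_one, abs_of_nonneg hc]
  · exfalso; rw [Int.abs_eq_natAbs] at h2; omega

end ScalarApprox

section MatrixPart

open Polynomial Matrix

open scoped Matrix.Norms.L2Operator in
lemma l2OpNorm_eq_norm {N : ℕ} (M : Matrix (Fin N) (Fin N) ℂ) : l2OpNorm M = ‖M‖ := rfl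

/-- conjugation by a unitary as an ℝ-algebra hom -/
noncomputable def conjAH {N : ℕ} (U : unitary (Matrix (Fin N) (Fin N) ℂ)) :
    Matrix (Fin N) (Fin N) ℂ →ₐ[ℝ] Matrix (Fin N) (Fin N) ℂ where
  toFun M := (U : Matrix (Fin N) (Fin N) ℂ) * M * star (U : Matrix (Fin N) (Fin N) ℂ)
  map_one' := by
    show (U : Matrix (Fin N) (Fin N) ℂ) * 1 * star (U : Matrix (Fin N) (Fin N) ℂ) = 1
    rw [mul_one]
    exact Unitary.coe_mul_star_self U
  map_mul' A B := by
    have h : star (U : Matrix (Fin N) (Fin N) ℂ) * (U : Matrix (Fin N) (Fin N) ℂ) = 1 :=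
      Unitary.coe_star_mul_self U
    calc (U : Matrix (Fin N) (Fin N) ℂ) * (A * B) * star (U : Matrix (Fin N) (Fin N) ℂ)
        = ((U : Matrix (Fin N) (Fin N) ℂ) * A) * (star (U : Matrix (Fin N) (Fin N) ℂ)
            * (U : Matrix (Fin N) (Fin N) ℂ)) * (B * star (U : Matrix (Fin N) (Fin N) ℂ)) := by
          rw [h]; noncomm_ring
      _ = _ := by noncomm_ring
  map_zero' := by simp
  map_add' A B := by noncomm_ring
  commutes' r := by
    simp only [Algebra.algebraMap_eq_smul_one]
    rw [mul_smul_comm, mul_one, smul_mul_assoc]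
    congr 1
    exact Unitary.coe_mul_star_self U

lemma matrix_aeval_conj {N : ℕ} (U : unitary (Matrix (Fin N) (Fin N) ℂ))
    (D : Matrix (Fin N) (Fin N) ℂ) (q : ℝ[X]) :
    aeval ((U : Matrix (Fin N) (Fin N) ℂ) * D * star (U : Matrix (Fin N) (Fin N) ℂ)) q
      = (U : Matrix (Fin N) (Fin N) ℂ) * aeval D q * star (U : Matrix (Fin N) (Fin N) ℂ) := by
  exact Polynomial.aeval_algHom_apply (conjAH U) D q

lemma aeval_diagonal {N : ℕ} (v : Fin N → ℂ) (q : ℝ[X]) :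
    aeval (Matrix.diagonal v) q = Matrix.diagonal (fun i => aeval (v i) q) := by
  have h1 : Matrix.diagonal v = Matrix.diagonalAlgHom (R := ℝ) v := rfl
  rw [h1, Polynomial.aeval_algHom_apply]
  show Matrix.diagonal (aeval v q) = _
  apply congrArg Matrix.diagonal
  funext i
  exact (Polynomial.aeval_algHom_apply (Pi.evalAlgHom ℝ (fun _ => ℂ) i) v q).symm

lemma l2OpNorm_diagonal_le {N : ℕ} (v : Fin N → ℂ) {ε : ℝ} (hε : 0 ≤ ε)
    (hv : ∀ i, ‖v i‖ ≤ ε) : l2OpNorm (Matrix.diagonal v) ≤ ε := by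
  rw [l2OpNorm]
  refine ContinuousLinearMap.opNorm_le_bound _ hε ?_
  intro w
  rw [LinearMap.coe_toContinuousLinearMap']
  rw [EuclideanSpace.norm_eq, EuclideanSpace.norm_eq]
  have happ : ∀ i, (Matrix.toEuclideanLin (Matrix.diagonal v) w) i = v i * w i := by
    intro i
    show ((Matrix.diagonal v) *ᵥ (WithLp.equiv 2 (Fin N → ℂ)) w) i = _
    rw [Matrix.mulVec_diagonal]
    rfl
  have h1 : ∑ i, ‖(Matrix.toEuclideanLin (Matrix.diagonal v) w) i‖^2
      ≤ ∑ i, ε^2 * ‖w i‖^2 := by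
    refine Finset.sum_le_sum fun i _ => ?_
    rw [happ i, norm_mul]
    have h2 : ‖v i‖^2 ≤ ε^2 := by
      have := hv i
      nlinarith [norm_nonneg (v i)]
    nlinarith [norm_nonneg (w i), sq_nonneg (‖w i‖)]
  calc Real.sqrt (∑ i, ‖(Matrix.toEuclideanLin (Matrix.diagonal v) w) i‖^2)
      ≤ Real.sqrt (∑ i, ε^2 * ‖w i‖^2) := Real.sqrt_le_sqrt h1
    _ = ε * Real.sqrt (∑ i, ‖w i‖^2) := by
        rw [← Finset.mul_sum, Real.sqrt_mul (by positivity), Real.sqrt_sq hε]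

lemma eigenvalue_le_one {N : ℕ} (ρ : Matrix (Fin N) (Fin N) ℂ) (hH : ρ.IsHermitian)
    (hρ1 : l2OpNorm ρ ≤ 1) (i : Fin N) : |hH.eigenvalues i| ≤ 1 := by
  set v : EuclideanSpace ℂ (Fin N) := hH.eigenvectorBasis i with hv
  have hv1 : ‖v‖ = 1 := hH.eigenvectorBasis.orthonormal.1 i
  have happ : Matrix.toEuclideanLin ρ v = (hH.eigenvalues i : ℂ) • v := by
    apply (WithLp.equiv 2 (Fin N → ℂ)).injective
    show ρ *ᵥ (WithLp.equiv 2 (Fin N → ℂ)) v = _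
    have hb := hH.mulVec_eigenvectorBasis i
    rw [show (WithLp.equiv 2 (Fin N → ℂ)) v = ⇑(hH.eigenvectorBasis i) from rfl]
    rw [hb]
    rw [show (WithLp.equiv 2 (Fin N → ℂ)) ((hH.eigenvalues i : ℂ) • v)
      = (hH.eigenvalues i : ℂ) • ⇑(hH.eigenvectorBasis i) from rfl]
    funext j
    simp [RCLike.real_smul_eq_coe_smul (K := ℂ)]
  have hle : ‖LinearMap.toContinuousLinearMap (Matrix.toEuclideanLin ρ) v‖
      ≤ l2OpNorm ρ * ‖v‖ := ContinuousLinearMap.le_opNorm _ v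
  rw [LinearMap.coe_toContinuousLinearMap'] at hle
  rw [happ, norm_smul, hv1] at hle
  simp only [mul_one] at hle
  calc |hH.eigenvalues i| = ‖(hH.eigenvalues i : ℂ)‖ := by
        rw [Complex.norm_real]; rfl
    _ ≤ l2OpNorm ρ := hle
    _ ≤ 1 := hρ1

lemma l2OpNorm_aeval_le {N : ℕ} (ρ : Matrix (Fin N) (Fin N) ℂ) (hρ : ρ.PosSemidef)
    (hρ1 : l2OpNorm ρ ≤ 1) (q : Polynomial ℝ) {ε : ℝ} (hε : 0 ≤ ε)
    (hq : ∀ x : ℝ, 0 ≤ x → x ≤ 1 → |q.eval x| ≤ ε) :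
    l2OpNorm (Polynomial.aeval ρ q) ≤ ε := by
  rcases Nat.eq_zero_or_pos N with hN | hN
  · subst hN
    have hz : (LinearMap.toContinuousLinearMap
        (Matrix.toEuclideanLin (Polynomial.aeval ρ q))) = 0 := by
      ext w i
      exact i.elim0
    rw [l2OpNorm, hz, norm_zero]
    exact hε
  haveI : Nonempty (Fin N) := ⟨⟨0, hN⟩⟩
  have hH := hρ.1
  set U : unitary (Matrix (Fin N) (Fin N) ℂ) := hH.eigenvectorUnitary with hU
  set w : Fin N → ℂ := fun i => ((q.eval (hH.eigenvalues i) : ℝ) : ℂ) with hw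
  have key : Polynomial.aeval ρ q = (U : Matrix (Fin N) (Fin N) ℂ) * Matrix.diagonal w
      * star (U : Matrix (Fin N) (Fin N) ℂ) := by
    conv_lhs => rw [hH.spectral_theorem]
    rw [Unitary.conjStarAlgAut_apply]
    rw [matrix_aeval_conj, aeval_diagonal]
    congr 2
    apply congrArg Matrix.diagonal
    funext i
    show Polynomial.aeval (algebraMap ℝ ℂ (hH.eigenvalues i)) q = w i
    rw [Polynomial.aeval_algebraMap_apply_eq_algebraMap_eval]
    rfl
  rw [key]
  have hunit : l2OpNorm ((U : Matrix (Fin N) (Fin N) ℂ) * Matrix.diagonal w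
      * star (U : Matrix (Fin N) (Fin N) ℂ)) = l2OpNorm (Matrix.diagonal w) := by
    open scoped Matrix.Norms.L2Operator in
    rw [l2OpNorm_eq_norm, l2OpNorm_eq_norm]
    rw [CStarRing.norm_mul_mem_unitary _ (Unitary.star_mem U.2)]
    rw [CStarRing.norm_mem_unitary_mul _ U.2]
  rw [hunit]
  refine l2OpNorm_diagonal_le w hε ?_
  intro i
  rw [hw]
  have h0 : 0 ≤ hH.eigenvalues i := hρ.eigenvalues_nonneg i
  have h1 : hH.eigenvalues i ≤ 1 := by
    have := eigenvalue_le_one ρ hH hρ1 i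
    rw [abs_le] at this
    exact this.2
  have := hq (hH.eigenvalues i) h0 h1
  calc ‖((q.eval (hH.eigenvalues i) : ℝ) : ℂ)‖ = |q.eval (hH.eigenvalues i)| := by
        rw [Complex.norm_real]; rfl
    _ ≤ ε := this

end MatrixPart

/-- For every `k ≥ 2` and `ε ∈ (0,1)` there is a real polynomial `p` of degree at most
`⌈√(2(k-1)·ln(2/ε))⌉` such that for every positive semidefinite `ρ` with `‖ρ‖ ≤ 1`,
`‖p(ρ) - ρ^(k-1)‖ ≤ ε`. -/
theorem exists_poly_block_encoding_power (k : ℕ) (hk : 2 ≤ k)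
    (ε : ℝ) (hε0 : 0 < ε) (hε1 : ε < 1) :
    ∃ p : Polynomial ℝ,
      p.natDegree ≤ ⌈Real.sqrt (2 * ((k : ℝ) - 1) * Real.log (2 / ε))⌉₊ ∧
      ∀ (N : ℕ) (ρ : Matrix (Fin N) (Fin N) ℂ), ρ.PosSemidef → l2OpNorm ρ ≤ 1 →
        l2OpNorm (Polynomial.aeval ρ p - ρ ^ (k - 1)) ≤ ε := by
  set m : ℕ := k - 1 with hm
  have hm1 : 1 ≤ m := by omega
  have hmcast : ((k : ℝ) - 1) = (m : ℝ) := by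
    rw [hm]; push_cast [Nat.cast_sub (by omega : 1 ≤ k)]; ring
  set L : ℝ := Real.log (2 / ε) with hL
  have hL0 : 0 < L := Real.log_pos (by rw [lt_div_iff₀ hε0]; linarith)
  set d : ℕ := ⌈Real.sqrt (2 * ((k : ℝ) - 1) * L)⌉₊ with hd
  have hdge : Real.sqrt (2 * (m:ℝ) * L) ≤ d := by
    rw [hd, hmcast]; exact Nat.le_ceil _
  have harg0 : 0 ≤ 2 * (m:ℝ) * L := by positivity
  have hd2 : 2 * (m:ℝ) * L ≤ (d:ℝ)^2 := by
    have := pow_le_pow_left₀ (Real.sqrt_nonneg _) hdge 2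
    rwa [Real.sq_sqrt harg0] at this
  have hm0 : (0:ℝ) < m := by exact_mod_cast hm1
  have htail : 2 * Real.exp (-(d:ℝ)^2 / (2*m)) ≤ ε := by
    have h1 : -(d:ℝ)^2 / (2*m) ≤ -L := by
      rw [neg_div, neg_le_neg_iff, le_div_iff₀ (by positivity)]
      linarith
    have h2 : Real.exp (-(d:ℝ)^2 / (2*m)) ≤ Real.exp (-L) := Real.exp_le_exp.2 h1
    have h3 : Real.exp (-L) = ε / 2 := by
      rw [hL, Real.exp_neg, Real.exp_log (by positivity)]
      rw [inv_div]
    linarith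
  refine ⟨chebApprox m d, chebApprox_natDegree_le m d, ?_⟩
  intro N ρ hρ hρ1
  have hsub : Polynomial.aeval ρ (chebApprox m d) - ρ ^ (k-1)
      = Polynomial.aeval ρ (chebApprox m d - Polynomial.X ^ m) := by
    rw [map_sub, map_pow, Polynomial.aeval_X, hm]
  rw [hsub]
  refine l2OpNorm_aeval_le ρ hρ hρ1 _ hε0.le ?_
  intro x hx0 hx1
  rw [Polynomial.eval_sub, Polynomial.eval_pow, Polynomial.eval_X]
  calc |Polynomial.eval x (chebApprox m d) - x^m|
      ≤ ∑ j ∈ Finset.range (m+1),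
          (if (d:ℤ) < |(m:ℤ) - 2*j| then (m.choose j : ℝ) / 2^m else 0) :=
        chebApprox_err m d x ⟨by linarith, hx1⟩
    _ ≤ 2 * Real.exp (-(d:ℝ)^2 / (2*m)) := tail_bound m d hm1
    _ ≤ ε := htail
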